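/- Let p, q ≥ 1 and let Ũ(k) = (a(b(1−k) − (1+k))/((aq+b)(1−k)−(1+k)))J_{p×p} + bI_{p×p} with |b| = 1. Then Ũ(k) has the eigenvalue (1−k)/(1+k) for all k in a nonempty open set (where defined) if and only if p = q and ap + b = 0 and (ap)² = 1; and Ũ(k) never has the eigenvalue (1+k)/(1−k) identically in k. -/

import Mathlib

open Matrix Complex

lemma detJ_aux (p : ℕ) (hp : 1 ≤ p) (Jp : Matrix (Fin p) (Fin p) ℂ)
    (hJp : ∀ i j, Jp i j = 1) (c d : ℂ) :
    (c • Jp + d • (1 : Matrix (Fin p) (Fin p) ℂ)).det = d ^ (p - 1) * (p * c + d) := by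
  obtain ⟨n, rfl⟩ : ∃ n, p = n + 1 := ⟨p - 1, (Nat.succ_pred_eq_of_pos hp).symm⟩
  by_cases hd : d = 0
  · subst hd
    simp only [zero_smul, add_zero]
    cases n with
    | zero =>
      simp [Matrix.det_fin_one, hJp]
    | succ m =>
      have h0 : (c • Jp) 0 = (c • Jp) 1 := by
        funext j; simp [hJp]
      have hne : (0 : Fin (m + 1 + 1)) ≠ 1 := by simp [Fin.ext_iff]
      rw [Matrix.det_zero_of_row_eq hne h0]
      simp
  · have key : c • Jp + d • (1 : Matrix (Fin (n+1)) (Fin (n+1)) ℂ)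
        = d • (1 + Matrix.replicateCol Unit (fun _ => c / d) * Matrix.replicateRow Unit (fun _ => (1 : ℂ))) := by
      ext i j
      by_cases hij : i = j <;>
        simp [Matrix.mul_apply, hJp, Matrix.one_apply, hij, mul_add, mul_div_cancel₀ _ hd,
          add_comm]
    rw [key, Matrix.det_smul, Matrix.det_one_add_replicateCol_mul_replicateRow]
    simp only [Fintype.card_fin, dotProduct, Finset.sum_const, Finset.card_univ, Fintype.card_fin,
      nsmul_eq_mul, one_mul, Nat.add_sub_cancel]
    rw [pow_succ]
    field_simp
    ring

/-- Two distinct roots of `x*(1-k)-(1+k)` are impossible. -/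
lemma lin_root_aux (x k1 k2 : ℂ) (hne : k1 ≠ k2)
    (e1 : x * (1 - k1) - (1 + k1) = 0) (e2 : x * (1 - k2) - (1 + k2) = 0) : False := by
  have hx : (x + 1) * (k1 - k2) = 0 := by linear_combination e2 - e1
  rcases mul_eq_zero.1 hx with h | h
  · have hx1 : x = -1 := by linear_combination h
    rw [hx1] at e1
    have : (-2 : ℂ) = 0 := by linear_combination e1
    norm_num at this
  · exact hne (by linear_combination h)


/-- Identity theorem specialization. -/
lemma vanish_aux (f : ℂ → ℂ) (hf : Differentiable ℂ f) (S : Set ℂ) (hSo : IsOpen S)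
    (z0 : ℂ) (hz0 : z0 ∈ S) (h : ∀ k ∈ S, f k = 0) : ∀ k : ℂ, f k = 0 := by
  have hA : AnalyticOnNhd ℂ f Set.univ :=
    DifferentiableOn.analyticOnNhd hf.differentiableOn isOpen_univ
  have := hA.eqOn_zero_of_preconnected_of_eventuallyEq_zero isPreconnected_univ
    (Set.mem_univ z0) (Filter.eventuallyEq_of_mem (hSo.mem_nhds hz0) h)
  intro k
  exact this (Set.mem_univ k)

lemma key_fwd (p q : ℕ) (a b k : ℂ)
    (hD : (a * ↑q + b) * (1 - k) - (1 + k) ≠ 0) (ht : (1 : ℂ) + k ≠ 0) :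
    (↑p * a * (b * (1 - k) - (1 + k)) + b * ((a * ↑q + b) * (1 - k) - (1 + k))) * (1 + k)
      - (1 - k) * ((a * ↑q + b) * (1 - k) - (1 + k))
      = (↑p * (a * (b * (1 - k) - (1 + k)) / ((a * ↑q + b) * (1 - k) - (1 + k)))
          + (b - (1 - k) / (1 + k))) * ((1 + k) * ((a * ↑q + b) * (1 - k) - (1 + k))) := by
  have e1 : a * (b * (1 - k) - (1 + k)) / ((a * ↑q + b) * (1 - k) - (1 + k))
      * ((a * ↑q + b) * (1 - k) - (1 + k)) = a * (b * (1 - k) - (1 + k)) := div_mul_cancel₀ _ hD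
  have e2 : (1 - k) / (1 + k) * (1 + k) = 1 - k := div_mul_cancel₀ _ ht
  linear_combination (-(↑p * (1 + k))) * e1 + ((a * ↑q + b) * (1 - k) - (1 + k)) * e2

lemma key_bwd (p q : ℕ) (a b k : ℂ)
    (hD : (a * ↑q + b) * (1 - k) - (1 + k) ≠ 0) (hs : (1 : ℂ) - k ≠ 0) :
    (b * (1 - k) - (1 + k)) * ((↑p * a + a * ↑q + b) * (1 - k) - (1 + k))
      = (↑p * (a * (b * (1 - k) - (1 + k)) / ((a * ↑q + b) * (1 - k) - (1 + k)))
          + (b - (1 + k) / (1 - k))) * ((1 - k) * ((a * ↑q + b) * (1 - k) - (1 + k))) := by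
  have e1 : a * (b * (1 - k) - (1 + k)) / ((a * ↑q + b) * (1 - k) - (1 + k))
      * ((a * ↑q + b) * (1 - k) - (1 + k)) = a * (b * (1 - k) - (1 + k)) := div_mul_cancel₀ _ hD
  have e2 : (1 + k) / (1 - k) * (1 - k) = 1 + k := div_mul_cancel₀ _ hs
  linear_combination (-(↑p * (1 - k))) * e1 + ((a * ↑q + b) * (1 - k) - (1 + k)) * e2

lemma fac_aux (p q : ℕ) (a b k : ℂ) (h1 : a * ↑p + b = 0) (h2 : (a * ↑p) ^ 2 = 1)
    (hpq : (p : ℂ) = ↑q) (ht : (1 : ℂ) + k ≠ 0)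
    (hDeq : (a * ↑q + b) * (1 - k) - (1 + k) = -(1 + k)) :
    ↑p * (a * (b * (1 - k) - (1 + k)) / ((a * ↑q + b) * (1 - k) - (1 + k)))
      + (b - (1 - k) / (1 + k)) = 0 := by
  have hnum : -(↑p * a) * (b * (1 - k) - (1 + k)) + b * (1 + k) - (1 - k) = 0 := by
    linear_combination (1 - k) * h2 + ((1 + k) - a * ↑p * (1 - k)) * h1
  rw [hDeq, div_neg]
  field_simp
  linear_combination hnum

set_option maxHeartbeats 1000000 in
/-- The effective coupling matrix
`Ũ(k) = (a(b(1−k)−(1+k))/((aq+b)(1−k)−(1+k)))·J + b·I` (with `|b| = 1`) has the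
eigenvalue `(1−k)/(1+k)` identically in `k` iff `p = q`, `ap + b = 0` and
`(ap)² = 1`; and it never has the eigenvalue `(1+k)/(1−k)` identically in `k`. -/
theorem stmt19 (p q : ℕ) (hp : 1 ≤ p) (hq : 1 ≤ q) (a b : ℂ)
    (hb : ‖b‖ = 1)
    (Jp : Matrix (Fin p) (Fin p) ℂ) (hJp : ∀ i j, Jp i j = 1)
    (Ueff : ℂ → Matrix (Fin p) (Fin p) ℂ)
    (hUeff : ∀ k : ℂ, Ueff k
      = (a * (b * (1 - k) - (1 + k)) / ((a * q + b) * (1 - k) - (1 + k))) • Jp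
        + b • (1 : Matrix (Fin p) (Fin p) ℂ)) :
    ((∃ S : Set ℂ, IsOpen S ∧ S.Nonempty ∧ ∀ k ∈ S,
        (a * q + b) * (1 - k) - (1 + k) ≠ 0 ∧ (1 : ℂ) + k ≠ 0 ∧
        (Ueff k - ((1 - k) / (1 + k)) • (1 : Matrix (Fin p) (Fin p) ℂ)).det = 0)
      ↔ ((p : ℂ) = q ∧ a * p + b = 0 ∧ (a * p) ^ 2 = 1)) ∧
    ¬ (∃ S : Set ℂ, IsOpen S ∧ S.Nonempty ∧ ∀ k ∈ S,
        (a * q + b) * (1 - k) - (1 + k) ≠ 0 ∧ (1 : ℂ) - k ≠ 0 ∧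
        (Ueff k - ((1 + k) / (1 - k)) • (1 : Matrix (Fin p) (Fin p) ℂ)).det = 0) := by
  have hb0 : b ≠ 0 := by
    intro h; rw [h] at hb; simp at hb
  -- determinant of Ueff k - lam • 1
  have hdet : ∀ k lam : ℂ,
      (Ueff k - lam • (1 : Matrix (Fin p) (Fin p) ℂ)).det
        = (b - lam) ^ (p - 1)
          * (p * (a * (b * (1 - k) - (1 + k)) / ((a * q + b) * (1 - k) - (1 + k))) + (b - lam)) := by
    intro k lam
    have hM : Ueff k - lam • (1 : Matrix (Fin p) (Fin p) ℂ)
        = (a * (b * (1 - k) - (1 + k)) / ((a * q + b) * (1 - k) - (1 + k))) • Jp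
          + (b - lam) • (1 : Matrix (Fin p) (Fin p) ℂ) := by
      rw [hUeff, sub_smul, add_sub_assoc]
    rw [hM, detJ_aux p hp Jp hJp]
  constructor
  · constructor
    · -- forward direction
      rintro ⟨S, hSo, ⟨z0, hz0⟩, hS⟩
      -- F vanishes on S
      have hF0 : ∀ k ∈ S,
          (b * (1 + k) - (1 - k)) ^ (p - 1)
            * ((p * a * (b * (1 - k) - (1 + k)) + b * ((a * q + b) * (1 - k) - (1 + k))) * (1 + k)
              - (1 - k) * ((a * q + b) * (1 - k) - (1 + k))) = 0 := by
        intro k hk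
        obtain ⟨hD, ht, hdet0⟩ := hS k hk
        rw [hdet k ((1 - k) / (1 + k))] at hdet0
        rcases mul_eq_zero.1 hdet0 with h | h
        · obtain ⟨h, hp1⟩ := pow_eq_zero_iff'.1 h
          have hz : b * (1 + k) - (1 - k) = 0 := by
            field_simp at h
            linear_combination h
          rw [hz, zero_pow hp1, zero_mul]
        · rw [key_fwd p q a b k hD ht, h, zero_mul, mul_zero]
      -- identity theorem
      have hFall : ∀ k : ℂ,
          (b * (1 + k) - (1 - k)) ^ (p - 1)
            * ((p * a * (b * (1 - k) - (1 + k)) + b * ((a * q + b) * (1 - k) - (1 + k))) * (1 + k)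
              - (1 - k) * ((a * q + b) * (1 - k) - (1 + k))) = 0 := by
        exact vanish_aux _ (by fun_prop) S hSo z0 hz0 hF0
      -- extract coefficient relations
      have hR : ∀ k : ℂ, b * (1 + k) - (1 - k) ≠ 0 →
          (p * a * (b * (1 - k) - (1 + k)) + b * ((a * q + b) * (1 - k) - (1 + k))) * (1 + k)
            - (1 - k) * ((a * q + b) * (1 - k) - (1 + k)) = 0 := by
        intro k hk
        rcases mul_eq_zero.1 (hFall k) with h | h
        · exact absurd (pow_eq_zero_iff'.1 h).1 hk
        · exact h
      have E1 := hR 1 (by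
        intro h
        exact hb0 (by linear_combination h / 2))
      have E2 := hR (-1) (by
        intro h
        have : (-2 : ℂ) = 0 := by linear_combination h
        norm_num at this)
      have h1 : a * p + b = 0 := by linear_combination (-(1:ℂ)/4) * E1
      have h2 : a * q + b = 0 := by linear_combination (-(1:ℂ)/4) * E2
      have ha : a ≠ 0 := by
        intro h; rw [h] at h1; exact hb0 (by linear_combination h1)
      have hpq : (p : ℂ) = q := by
        apply mul_left_cancel₀ ha
        linear_combination h1 - h2
      refine ⟨hpq, h1, ?_⟩
      by_cases hb1 : b = 1
      · subst hb1
        linear_combination (a * p - 1) * h1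
      · have E0 := hR 0 (by
          intro h
          apply hb1
          linear_combination h)
        linear_combination (a * p - 1) * h1 + (b - 1) * h2 - E0
    · -- backward direction
      rintro ⟨hpq, h1, h2⟩
      refine ⟨Metric.ball 0 1, Metric.isOpen_ball, ⟨0, by simp⟩, ?_⟩
      intro k hk
      have hkabs : ‖k‖ < 1 := by
        simpa [Complex.dist_eq] using hk
      have ht : (1 : ℂ) + k ≠ 0 := by
        intro h
        have : k = -1 := by linear_combination h
        rw [this] at hkabs
        simp at hkabs
      have hDeq : (a * q + b) * (1 - k) - (1 + k) = -(1 + k) := by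
        linear_combination (1 - k) * h1 - a * (1 - k) * hpq
      refine ⟨by rw [hDeq]; exact neg_ne_zero.2 ht, ht, ?_⟩
      rw [hdet k ((1 - k) / (1 + k))]
      rw [fac_aux p q a b k h1 h2 hpq ht hDeq, mul_zero]
  · -- second part
    rintro ⟨S, hSo, ⟨z0, hz0⟩, hS⟩
    have hF0 : ∀ k ∈ S,
        (b * (1 - k) - (1 + k)) ^ p
          * ((↑p * a + a * ↑q + b) * (1 - k) - (1 + k)) = 0 := by
      intro k hk
      obtain ⟨hD, hs, hdet0⟩ := hS k hk
      rw [hdet k ((1 + k) / (1 - k))] at hdet0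
      have hps : (b * (1 - k) - (1 + k)) ^ p
          = (b * (1 - k) - (1 + k)) ^ (p - 1) * (b * (1 - k) - (1 + k)) := by
        conv_lhs => rw [show p = p - 1 + 1 by omega]
        rw [pow_succ]
      rcases mul_eq_zero.1 hdet0 with h | h
      · obtain ⟨h, -⟩ := pow_eq_zero_iff'.1 h
        have hz : b * (1 - k) - (1 + k) = 0 := by
          field_simp at h
          linear_combination h
        rw [hz, zero_pow (by omega), zero_mul]
      · rw [hps, mul_assoc, key_bwd p q a b k hD hs, h, zero_mul, mul_zero]
    have hFall : ∀ k : ℂ,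
        (b * (1 - k) - (1 + k)) ^ p
          * ((↑p * a + a * ↑q + b) * (1 - k) - (1 + k)) = 0 := by
      exact vanish_aux _ (by fun_prop) S hSo z0 hz0 hF0
    -- find a point where both linear factors are nonzero
    have hex : ∃ k : ℂ, b * (1 - k) - (1 + k) ≠ 0
        ∧ (↑p * a + a * ↑q + b) * (1 - k) - (1 + k) ≠ 0 := by
      by_contra hcon
      push_neg at hcon
      have hne01 : (0 : ℂ) ≠ 1 := by norm_num
      have hne02 : (0 : ℂ) ≠ 2 := by norm_num
      have hne12 : (1 : ℂ) ≠ 2 := by norm_num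
      rcases Classical.em (b * (1 - (0:ℂ)) - (1 + 0) = 0) with h0 | h0
      · rcases Classical.em (b * (1 - (1:ℂ)) - (1 + 1) = 0) with h1' | h1'
        · exact lin_root_aux _ _ _ hne01 h0 h1'
        · rcases Classical.em (b * (1 - (2:ℂ)) - (1 + 2) = 0) with h2' | h2'
          · exact lin_root_aux _ _ _ hne02 h0 h2'
          · have c1 := hcon 1 h1'
            have c2 := hcon 2 h2'
            exact lin_root_aux _ _ _ hne12 c1 c2
      · rcases Classical.em (b * (1 - (1:ℂ)) - (1 + 1) = 0) with h1' | h1'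
        · rcases Classical.em (b * (1 - (2:ℂ)) - (1 + 2) = 0) with h2' | h2'
          · exact lin_root_aux _ _ _ hne12 h1' h2'
          · have c0 := hcon 0 h0
            have c2 := hcon 2 h2'
            exact lin_root_aux _ _ _ hne02 c0 c2
        · have c0 := hcon 0 h0
          have c1 := hcon 1 h1'
          exact lin_root_aux _ _ _ hne01 c0 c1
    obtain ⟨k, hk1, hk2⟩ := hex
    rcases mul_eq_zero.1 (hFall k) with h | h
    · exact hk1 ((pow_eq_zero_iff (show p ≠ 0 by omega)).1 h)
    · exact hk2 h
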